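/- Let t₁ and t₂ be real numbers with t₁ > t₂ > 1. Then there is no homeomorphism f : ℝ → ℝ such that f(t₁·x + (1−t₁)·y) = t₂·f(x) + (1−t₂)·f(y) for all x, y ∈ ℝ. That is, the Alexander quandles (ℝ, ∗_{t₁}) and (ℝ, ∗_{t₂}) are not isomorphic as topological quandles. -/

import Mathlib

/-- Lemma 3.5: if `t₁ > t₂ > 1`, the Alexander quandles `(ℝ, ∗_{t₁})` and `(ℝ, ∗_{t₂})`
are not isomorphic. -/
theorem alexander_quandles_R_not_isomorphic_of_lt_of_one_lt (t₁ t₂ : ℝ)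
    (ht₂ : 1 < t₂) (ht : t₂ < t₁) :
    ¬ ∃ f : ℝ ≃ₜ ℝ, ∀ x y : ℝ,
      f (t₁ * x + (1 - t₁) * y) = t₂ * f x + (1 - t₂) * f y := by
  rintro ⟨f, hf⟩
  have ht₁0 : (t₁ : ℝ) ≠ 0 := by linarith
  have ht₁1 : (1 - t₁ : ℝ) ≠ 0 := by intro h; linarith [sub_eq_zero.mp h]
  set g : ℝ → ℝ := fun x => f x - f 0 with hg
  have h1 : ∀ x, g (t₁ * x) = t₂ * g x := by
    intro x
    have := hf x 0
    simp only [mul_zero, add_zero] at this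
    simp only [hg, this]; ring
  have h2 : ∀ y, g ((1 - t₁) * y) = (1 - t₂) * g y := by
    intro y
    have := hf 0 y
    simp only [mul_zero, zero_add] at this
    simp only [hg, this]; ring
  have hadd : ∀ u v : ℝ, g (u + v) = g u + g v := by
    intro u v
    have := hf (u / t₁) (v / (1 - t₁))
    rw [mul_div_cancel₀ _ ht₁0, mul_div_cancel₀ _ ht₁1] at this
    have e : g (u + v) = t₂ * g (u / t₁) + (1 - t₂) * g (v / (1 - t₁)) := by
      simp only [hg, this]; ring
    rw [e, ← h1 (u / t₁), ← h2 (v / (1 - t₁)),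
      mul_div_cancel₀ _ ht₁0, mul_div_cancel₀ _ ht₁1]
  have hcont : Continuous g := (f.continuous).sub continuous_const
  let G : ℝ →+ ℝ := AddMonoidHom.mk' g hadd
  have hlin : ∀ x : ℝ, g x = x * g 1 := by
    intro x
    have := (G.toRealLinearMap hcont).map_smul x 1
    simpa [G, AddMonoidHom.coe_toRealLinearMap, smul_eq_mul] using (show g (x • (1:ℝ)) = x • g 1 from this)
  have hg1 : g 1 ≠ 0 := by
    simp only [hg, sub_ne_zero]
    exact fun h => one_ne_zero (f.injective h)
  have : t₁ * g 1 = t₂ * g 1 := by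
    have := h1 1
    rw [mul_one, hlin t₁] at this
    linarith [this]
  have : t₁ = t₂ := mul_right_cancel₀ hg1 this
  linarith
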